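/- If G is a nontrivial k-dense graph and v is a vertex of G with degree exactly k−1, then the closed neighborhood N[v] induces a complete subgraph of G on k vertices (i.e., v lies in a clique of size k). -/

import Mathlib

/-- A graph `G` is `k`-dense if every two adjacent vertices have at least `k - 2`
common neighbors. -/
def kDense {V : Type*} (G : SimpleGraph V) (k : ℕ) : Prop :=
  ∀ u v : V, G.Adj u v → k - 2 ≤ (G.neighborSet u ∩ G.neighborSet v).ncard

/-- A graph is `k*`-dense if it is `k`-dense but not `(k+1)`-dense. -/
def kStarDense {V : Type*} (G : SimpleGraph V) (k : ℕ) : Prop :=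
  kDense G k ∧ ¬ kDense G (k + 1)

/-- In a nontrivial k-dense graph, a vertex of degree exactly k−1 has its closed
neighborhood inducing a complete subgraph on k vertices. -/
theorem clique_of_min_degree {V : Type*} [Fintype V] (G : SimpleGraph V) (k : ℕ) (hk : 2 ≤ k)
    (hniso : ∀ v : V, ∃ u : V, G.Adj v u) (hdense : kDense G k)
    (v : V) (hdeg : (G.neighborSet v).ncard = k - 1) :
    (∀ a ∈ insert v (G.neighborSet v), ∀ b ∈ insert v (G.neighborSet v), a ≠ b → G.Adj a b) ∧
      (insert v (G.neighborSet v)).ncard = k := by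
  classical
  have hfin : (G.neighborSet v).Finite := Set.toFinite _
  have hvnot : v ∉ G.neighborSet v := fun h => G.loopless.irrefl v h
  -- key: every neighbor a of v is adjacent to every other neighbor b of v
  have key : ∀ a ∈ G.neighborSet v, ∀ b ∈ G.neighborSet v, a ≠ b → G.Adj a b := by
    intro a ha b hb hab
    have hadj : G.Adj v a := ha
    have hcommon := hdense v a hadj
    have hsub : G.neighborSet v ∩ G.neighborSet a ⊆ G.neighborSet v \ {a} := by
      intro x hx
      refine ⟨hx.1, ?_⟩
      rintro rfl
      exact G.loopless.irrefl _ hx.2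
    have hdiff : (G.neighborSet v \ {a}).ncard = k - 2 := by
      rw [Set.ncard_diff_singleton_of_mem ha, hdeg]
      omega
    have heq : G.neighborSet v ∩ G.neighborSet a = G.neighborSet v \ {a} := by
      apply Set.eq_of_subset_of_ncard_le hsub (by rw [hdiff]; exact hcommon)
        (hfin.diff)
    have hb' : b ∈ G.neighborSet v \ {a} := ⟨hb, by simpa using hab.symm⟩
    rw [← heq] at hb'
    exact (hb'.2 : G.Adj a b).symm.symm
  constructor
  · intro a ha b hb hab
    rcases ha with rfl | ha
    · rcases hb with rfl | hb
      · exact absurd rfl hab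
      · exact hb
    · rcases hb with rfl | hb
      · exact SimpleGraph.Adj.symm ha
      · exact key a ha b hb hab
  · rw [Set.ncard_insert_of_notMem hvnot hfin, hdeg]
    omega
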